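/- Let w1 and w2 be distinct elements of W^S of equal length, l(w1) = l(w2). Then w1.0 − w2.0 is not a nonnegative integer linear combination of the simple roots in S, i.e. w1.0 − w2.0 ∉ Q_S^+. (Corollary on incomparability of the weights w.0, part 2.) -/

import Mathlib

open scoped RealInnerProductSpace

noncomputable section

/-- The pairing of a weight with the coroot `β^∨ = 2β/(β,β)` of a vector `β`:
`⟨lam, β^∨⟩ = 2(lam,β)/(β,β)`. -/
def copair {V : Type*} [NormedAddCommGroup V] [InnerProductSpace ℝ V] (lam β : V) : ℝ :=
  2 * ⟪lam, β⟫ / ⟪β, β⟫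

/-- A finite reduced crystallographic root system together with a fixed base of
simple roots, realized in a finite-dimensional real inner product space. -/
structure BasedRootSystem (V : Type*) [NormedAddCommGroup V] [InnerProductSpace ℝ V]
    [FiniteDimensional ℝ V] where
  /-- the (finite) set of roots -/
  roots : Finset V
  /-- the number of simple roots -/
  rank : ℕ
  /-- the simple roots; they form a basis of the ambient space -/
  b : Module.Basis (Fin rank) ℝ V
  simple_mem : ∀ i, b i ∈ roots
  zero_not_mem : (0 : V) ∉ roots
  /-- the root system is reduced -/
  reduced : ∀ β ∈ roots, ∀ c : ℝ, c • β ∈ roots → c = 1 ∨ c = -1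
  /-- the root system is crystallographic -/
  crystallographic : ∀ β ∈ roots, ∀ γ ∈ roots, ∃ n : ℤ, copair β γ = (n : ℝ)
  /-- the set of roots is stable under the reflection in (the hyperplane orthogonal to)
  any root -/
  reflect_mem : ∀ β ∈ roots, ∀ γ ∈ roots, Submodule.reflection ((ℝ ∙ β)ᗮ) γ ∈ roots
  /-- each root is an integral linear combination of the simple roots -/
  coeff_int : ∀ β ∈ roots, ∀ i, ∃ n : ℤ, b.repr β i = (n : ℝ)
  /-- each root has either all coefficients nonnegative or all nonpositive -/
  coeff_sign : ∀ β ∈ roots, (∀ i, 0 ≤ b.repr β i) ∨ (∀ i, b.repr β i ≤ 0)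

namespace BasedRootSystem

variable {V : Type*} [NormedAddCommGroup V] [InnerProductSpace ℝ V] [FiniteDimensional ℝ V]
variable (P : BasedRootSystem V)

/-- the set `R⁺` of positive roots -/
def posRoots : Finset V :=
  (P.roots.finite_toSet.inter_of_left {β | ∀ i, 0 ≤ P.b.repr β i}).toFinset

/-- `ρ`, half the sum of the positive roots -/
def rho : V := (2 : ℝ)⁻¹ • ∑ β ∈ P.posRoots, β

/-- the simple reflection corresponding to the simple root `b i` -/
def sr (i : Fin P.rank) : V ≃ₗᵢ[ℝ] V := Submodule.reflection ((ℝ ∙ P.b i)ᗮ)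

/-- the Weyl group, generated by the simple reflections -/
def weylGroup : Subgroup (V ≃ₗᵢ[ℝ] V) := Subgroup.closure (Set.range P.sr)

/-- the length of a Weyl group element: the minimal number of factors in an
expression as a product of simple reflections -/
def len (w : V ≃ₗᵢ[ℝ] V) : ℕ :=
  sInf {n | ∃ f : Fin n → Fin P.rank, w = (List.ofFn fun k => P.sr (f k)).prod}

/-- the shifted (dot) action on the zero weight: `w.0 = wρ - ρ` -/
def dotZero (w : V ≃ₗᵢ[ℝ] V) : V := w P.rho - P.rho

/-- the sublattice `Q_S ⊆ Q` generated by the simple roots indexed by `S` -/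
def QS (S : Set (Fin P.rank)) : AddSubgroup V := AddSubgroup.closure (P.b '' S)

/-- the positive cone `Q⁺` of nonnegative integer combinations of simple roots -/
def Qplus : AddSubmonoid V := AddSubmonoid.closure (Set.range P.b)

/-- `W^S = {w ∈ W | R_S^+ ⊆ w R^+}` -/
def WS (S : Set (Fin P.rank)) : Set (V ≃ₗᵢ[ℝ] V) :=
  {w | w ∈ P.weylGroup ∧
    ∀ β ∈ P.posRoots, β ∈ P.QS S → ∃ γ ∈ P.posRoots, w γ = β}

/-- irreducibility of the root system: the base cannot be partitioned into two
nonempty mutually orthogonal subsets -/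
def Irred : Prop :=
  ∀ A B : Set (Fin P.rank), A ∪ B = Set.univ →
    (∀ i ∈ A, ∀ j ∈ B, ⟪P.b i, P.b j⟫ = 0) → A = ∅ ∨ B = ∅

/-- the weight lattice `P` -/
def weights : Set V := {lam | ∀ i, ∃ n : ℤ, copair lam (P.b i) = (n : ℝ)}

/-- the dominant integral weights `P⁺` -/
def domWeights : Set V := {lam | lam ∈ P.weights ∧ ∀ i, 0 ≤ copair lam (P.b i)}

/-- the weights `P_S^+` which are dominant and integral with respect to `S` -/
def domWeightsS (S : Set (Fin P.rank)) : Set V :=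
  {lam | lam ∈ P.weights ∧ ∀ i ∈ S, 0 ≤ copair lam (P.b i)}

end BasedRootSystem

section Aux

theorem refl_formula {V : Type*} [NormedAddCommGroup V] [InnerProductSpace ℝ V]
    [FiniteDimensional ℝ V]
    (v x : V) : Submodule.reflection ((ℝ ∙ v)ᗮ) x = x - copair x v • v := by
  rw [Submodule.reflection_orthogonal_apply, Submodule.reflection_singleton_apply]
  rw [copair, real_inner_self_eq_norm_sq, real_inner_comm x v]
  norm_num [RCLike.ofReal_real_eq_id]
  module

theorem refl_conj {V : Type*} [NormedAddCommGroup V] [InnerProductSpace ℝ V]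
    [FiniteDimensional ℝ V]
    (g : V ≃ₗᵢ[ℝ] V) (u v : V) (h : g u = v) :
    Submodule.reflection ((ℝ ∙ v)ᗮ) = g * Submodule.reflection ((ℝ ∙ u)ᗮ) * g⁻¹ := by
  ext x
  have : (g * Submodule.reflection ((ℝ ∙ u)ᗮ) * g⁻¹) x = g (Submodule.reflection ((ℝ ∙ u)ᗮ) (g.symm x)) := rfl
  rw [this, refl_formula, refl_formula, map_sub, map_smul, g.apply_symm_apply, h, copair, copair,
    ← h, ← g.apply_symm_apply x, g.inner_map_map, g.inner_map_map, g.apply_symm_apply]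

end Aux

namespace BasedRootSystem

variable {V : Type*} [NormedAddCommGroup V] [InnerProductSpace ℝ V] [FiniteDimensional ℝ V]
variable (P : BasedRootSystem V)

theorem mem_posRoots' {β : V} :
    β ∈ P.posRoots ↔ β ∈ P.roots ∧ ∀ i, 0 ≤ P.b.repr β i := by
  simp [BasedRootSystem.posRoots, Set.Finite.mem_toFinset, Set.mem_inter_iff]

theorem simple_mem_posRoots (i : Fin P.rank) : P.b i ∈ P.posRoots := by
  rw [mem_posRoots']
  refine ⟨P.simple_mem i, fun j => ?_⟩
  rw [P.b.repr_self, Finsupp.single_apply]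
  split <;> norm_num

theorem exists_pos_coord {β : V} (h : β ∈ P.posRoots) : ∃ j, 0 < P.b.repr β j := by
  rw [mem_posRoots'] at h
  have hβ : β ≠ 0 := fun h0 => P.zero_not_mem (h0 ▸ h.1)
  have : P.b.repr β ≠ 0 := fun h0 => hβ (P.b.repr.map_eq_zero_iff.mp h0)
  obtain ⟨j, hj⟩ := Finsupp.ne_iff.mp this
  exact ⟨j, lt_of_le_of_ne (h.2 j) (by simpa using (Ne.symm hj))⟩

theorem neg_not_mem_posRoots {β : V} (h : β ∈ P.posRoots) : -β ∉ P.posRoots := by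
  obtain ⟨j, hj⟩ := P.exists_pos_coord h
  rw [mem_posRoots']
  rintro ⟨-, h2⟩
  have := h2 j
  rw [map_neg] at this
  simp only [Finsupp.coe_neg, Pi.neg_apply] at this
  linarith

theorem sr_apply' (i : Fin P.rank) (x : V) :
    P.sr i x = x - copair x (P.b i) • P.b i := refl_formula _ _

theorem sr_sr (i : Fin P.rank) (x : V) : P.sr i (P.sr i x) = x :=
  Submodule.reflection_reflection _ _

theorem sr_mul_self (i : Fin P.rank) : P.sr i * P.sr i = 1 := by
  ext x; exact P.sr_sr i x

theorem sr_inv (i : Fin P.rank) : (P.sr i)⁻¹ = P.sr i :=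
  inv_eq_of_mul_eq_one_left (P.sr_mul_self i)

theorem sr_simple (i : Fin P.rank) : P.sr i (P.b i) = -(P.b i) :=
  Submodule.reflection_orthogonalComplement_singleton_eq_neg _


theorem sr_mem_roots {β : V} (i : Fin P.rank) (h : β ∈ P.roots) : P.sr i β ∈ P.roots :=
  P.reflect_mem _ (P.simple_mem i) _ h

theorem eq_simple_of_coords {β : V} (hβ : β ∈ P.posRoots) (i : Fin P.rank)
    (h : ∀ j, j ≠ i → P.b.repr β j = 0) : β = P.b i := by
  have hrep : β = P.b.repr β i • P.b i := by
    conv_lhs => rw [← P.b.sum_repr β]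
    rw [Finset.sum_eq_single i]
    · intro j _ hj; rw [h j hj, zero_smul]
    · intro h'; exact absurd (Finset.mem_univ i) h'
  rcases P.reduced _ (P.simple_mem i) (P.b.repr β i) (hrep ▸ (P.mem_posRoots'.mp hβ).1) with h1 | h1
  · rw [hrep, h1, one_smul]
  · exfalso
    have := (P.mem_posRoots'.mp hβ).2 i
    rw [h1] at this; linarith

theorem sr_mem_posRoots {β : V} {i : Fin P.rank} (hβ : β ∈ P.posRoots) (hne : β ≠ P.b i) :
    P.sr i β ∈ P.posRoots := by
  have hj : ∃ j, j ≠ i ∧ 0 < P.b.repr β j := by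
    by_contra hc
    push_neg at hc
    exact hne (P.eq_simple_of_coords hβ i fun j hji =>
      le_antisymm (hc j hji) ((P.mem_posRoots'.mp hβ).2 j))
  obtain ⟨j, hji, hjpos⟩ := hj
  have hroot : P.sr i β ∈ P.roots := P.sr_mem_roots i (P.mem_posRoots'.mp hβ).1
  have hcoord : P.b.repr (P.sr i β) j = P.b.repr β j := by
    rw [P.sr_apply', map_sub, map_smul]
    simp [P.b.repr_self, Finsupp.single_apply, hji.symm, Ne.symm hji]
  rw [mem_posRoots']
  refine ⟨hroot, ?_⟩
  rcases P.coeff_sign _ hroot with h | h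
  · exact h
  · exfalso; have := h j; rw [hcoord] at this; linarith

theorem sr_rho (i : Fin P.rank) : P.sr i P.rho = P.rho - P.b i := by
  classical
  have hsum : ∑ β ∈ P.posRoots, P.sr i β = (∑ β ∈ P.posRoots, β) - 2 • P.b i := by
    rw [← Finset.insert_erase (P.simple_mem_posRoots i), Finset.sum_insert (Finset.notMem_erase _ _),
      Finset.sum_insert (Finset.notMem_erase _ _), P.sr_simple]
    have : ∑ β ∈ P.posRoots.erase (P.b i), P.sr i β = ∑ β ∈ P.posRoots.erase (P.b i), β := by
      apply Finset.sum_nbij' (i := fun β => P.sr i β) (j := fun β => P.sr i β)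
      · intro a ha
        rw [Finset.mem_erase] at ha ⊢
        refine ⟨?_, P.sr_mem_posRoots ha.2 ha.1⟩
        intro hc
        have : a = P.sr i (P.b i) := by rw [← hc, P.sr_sr]
        rw [P.sr_simple] at this
        exact P.neg_not_mem_posRoots (P.simple_mem_posRoots i) (this ▸ ha.2)
      · intro a ha
        rw [Finset.mem_erase] at ha ⊢
        refine ⟨?_, P.sr_mem_posRoots ha.2 ha.1⟩
        intro hc
        have : a = P.sr i (P.b i) := by rw [← hc, P.sr_sr]
        rw [P.sr_simple] at this
        exact P.neg_not_mem_posRoots (P.simple_mem_posRoots i) (this ▸ ha.2)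
      · intro a _; exact P.sr_sr i a
      · intro a _; exact P.sr_sr i a
      · intro a _; rfl
    rw [this]
    abel
  rw [BasedRootSystem.rho, map_smul, map_sum, hsum]
  rw [smul_sub]
  congr 1
  rw [two_smul, smul_add]
  module

theorem copair_rho_simple (i : Fin P.rank) : copair P.rho (P.b i) = 1 := by
  have h1 := P.sr_apply' i P.rho
  rw [P.sr_rho] at h1
  have h2 : P.b i = copair P.rho (P.b i) • P.b i := sub_right_injective h1
  have h3 : copair P.rho (P.b i) • P.b i = (1 : ℝ) • P.b i := by rw [one_smul, ← h2]
  exact smul_left_injective ℝ (P.b.ne_zero i) h3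


theorem inner_rho_simple_pos (i : Fin P.rank) : 0 < ⟪P.rho, P.b i⟫ := by
  have h := P.copair_rho_simple i
  rw [copair] at h
  have hbb : 0 < ⟪P.b i, P.b i⟫ := by
    rw [real_inner_self_eq_norm_sq]
    exact pow_pos (norm_pos_iff.mpr (P.b.ne_zero i)) 2
  have : 2 * ⟪P.rho, P.b i⟫ = ⟪P.b i, P.b i⟫ := by
    field_simp at h; linarith
  linarith

theorem inner_eq_sum_coords (x γ : V) :
    ⟪x, γ⟫ = ∑ j, P.b.repr γ j * ⟪x, P.b j⟫ := by
  conv_lhs => rw [← P.b.sum_repr γ]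
  rw [inner_sum]
  congr 1; ext j
  rw [real_inner_smul_right]

theorem inner_rho_pos {γ : V} (h : γ ∈ P.posRoots) : 0 < ⟪P.rho, γ⟫ := by
  rw [P.inner_eq_sum_coords]
  obtain ⟨j, hj⟩ := P.exists_pos_coord h
  apply Finset.sum_pos'
  · intro k _
    exact mul_nonneg ((P.mem_posRoots'.mp h).2 k) (P.inner_rho_simple_pos k).le
  · exact ⟨j, Finset.mem_univ j, mul_pos hj (P.inner_rho_simple_pos j)⟩

theorem mem_posRoots_of_inner_rho_pos {γ : V} (hγ : γ ∈ P.roots) (h : 0 < ⟪P.rho, γ⟫) :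
    γ ∈ P.posRoots := by
  rw [mem_posRoots']
  refine ⟨hγ, ?_⟩
  rcases P.coeff_sign _ hγ with hs | hs
  · exact hs
  · exfalso
    rw [P.inner_eq_sum_coords] at h
    have : ∑ j, P.b.repr γ j * ⟪P.rho, P.b j⟫ ≤ 0 := by
      apply Finset.sum_nonpos
      intro k _
      exact mul_nonpos_of_nonpos_of_nonneg (hs k) (P.inner_rho_simple_pos k).le
    linarith

/-- products of simple reflections preserve the roots -/
theorem listProd_mem_roots (L : List (Fin P.rank)) {β : V} (h : β ∈ P.roots) :
    (L.map P.sr).prod β ∈ P.roots := by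
  induction L with
  | nil => simpa using h
  | cons i L ih =>
    rw [List.map_cons, List.prod_cons]
    exact P.sr_mem_roots i ih

theorem listProd_mem_posRoots {L : List (Fin P.rank)}
    (hρ : (L.map P.sr).prod P.rho = P.rho) {β : V} (h : β ∈ P.posRoots) :
    (L.map P.sr).prod β ∈ P.posRoots := by
  set w := (L.map P.sr).prod with hw
  apply P.mem_posRoots_of_inner_rho_pos (P.listProd_mem_roots L (P.mem_posRoots'.mp h).1)
  have : ⟪P.rho, w β⟫ = ⟪w P.rho, w β⟫ := by rw [hρ]
  rw [this, w.inner_map_map]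
  exact P.inner_rho_pos h


theorem sr_conj {g : V ≃ₗᵢ[ℝ] V} {t i : Fin P.rank} (h : g (P.b t) = P.b i) :
    P.sr i = g * P.sr t * g⁻¹ :=
  refl_conj g _ _ h

/-- the deletion step: if a word sends the simple root `b t` out of the positive
roots, then the word times `sr t` can be rewritten with one fewer letter. -/
theorem deletion (L : List (Fin P.rank)) (t : Fin P.rank)
    (h : (L.map P.sr).prod (P.b t) ∉ P.posRoots) :
    ∃ M : List (Fin P.rank), M.length + 1 = L.length ∧
      (M.map P.sr).prod = (L.map P.sr).prod * P.sr t := by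
  induction L with
  | nil => exact absurd (by simpa using P.simple_mem_posRoots t) h
  | cons i L ih =>
    rw [List.map_cons, List.prod_cons] at h
    by_cases hv : (L.map P.sr).prod (P.b t) ∈ P.posRoots
    · have heq : (L.map P.sr).prod (P.b t) = P.b i := by
        by_contra hc
        exact h (P.sr_mem_posRoots hv hc)
      refine ⟨L, by simp, ?_⟩
      have hc := P.sr_conj heq
      rw [List.map_cons, List.prod_cons, hc]
      calc (L.map P.sr).prod
          = (L.map P.sr).prod * (P.sr t * P.sr t) := by rw [P.sr_mul_self, mul_one]
        _ = (L.map P.sr).prod * P.sr t * ((L.map P.sr).prod)⁻¹ * (L.map P.sr).prod * P.sr t := by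
            group
        _ = _ := by group
    · obtain ⟨M, hlen, hM⟩ := ih (by simpa using hv)
      refine ⟨i :: M, by simp [← hlen], ?_⟩
      rw [List.map_cons, List.prod_cons, hM, List.map_cons, List.prod_cons, mul_assoc]

/-- a product of simple reflections fixing `ρ` is the identity -/
theorem listProd_eq_one (n : ℕ) : ∀ L : List (Fin P.rank), L.length = n →
    (L.map P.sr).prod P.rho = P.rho → (L.map P.sr).prod = 1 := by
  induction n using Nat.strong_induction_on with
  | _ n ih =>
    intro L hL hρ
    rcases List.eq_nil_or_concat L with rfl | ⟨L', t, rfl⟩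
    · simp
    · rw [List.concat_eq_append] at hL hρ ⊢
      have hw : ((L' ++ [t]).map P.sr).prod = (L'.map P.sr).prod * P.sr t := by
        rw [List.map_append, List.prod_append]; simp
      set w := ((L' ++ [t]).map P.sr).prod with hwdef
      have h1 : w (P.b t) ∈ P.posRoots := P.listProd_mem_posRoots hρ (P.simple_mem_posRoots t)
      have h2 : (L'.map P.sr).prod (P.b t) ∉ P.posRoots := by
        have : (L'.map P.sr).prod (P.b t) = w (P.sr t (P.b t)) := by
          rw [hw]
          show _ = (L'.map P.sr).prod (P.sr t (P.sr t (P.b t)))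
          rw [P.sr_sr]
        rw [this, P.sr_simple, map_neg]
        exact P.neg_not_mem_posRoots h1
      obtain ⟨M, hlen, hM⟩ := P.deletion L' t h2
      rw [← hw] at hM
      have hlen2 : M.length < n := by
        rw [← hL]
        simp only [List.length_append, List.length_singleton]
        omega
      have := ih M.length hlen2 M rfl (by rw [hM]; exact hρ)
      rw [hM] at this
      exact this

theorem exists_word {w : V ≃ₗᵢ[ℝ] V} (h : w ∈ P.weylGroup) :
    ∃ L : List (Fin P.rank), w = (L.map P.sr).prod := by
  have hrev : ∀ L : List (Fin P.rank),
      ((L.reverse.map P.sr).prod) = ((L.map P.sr).prod)⁻¹ := by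
    intro L
    induction L with
    | nil => simp
    | cons i L ih =>
      rw [List.reverse_cons, List.map_append, List.prod_append, ih]
      simp [mul_inv_rev, P.sr_inv]
  induction h using Subgroup.closure_induction with
  | mem x hx => obtain ⟨i, rfl⟩ := hx; exact ⟨[i], by simp⟩
  | one => exact ⟨[], by simp⟩
  | mul x y hx hy ihx ihy =>
    obtain ⟨Lx, rfl⟩ := ihx
    obtain ⟨Ly, rfl⟩ := ihy
    exact ⟨Lx ++ Ly, by rw [List.map_append, List.prod_append]⟩
  | inv x hx ihx =>
    obtain ⟨L, rfl⟩ := ihx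
    exact ⟨L.reverse, (hrev L).symm⟩


theorem coords_nonneg_of_mem_Qplus {x : V} (hx : x ∈ P.Qplus) (i : Fin P.rank) :
    0 ≤ P.b.repr x i := by
  induction hx using AddSubmonoid.closure_induction with
  | mem y hy =>
    obtain ⟨j, rfl⟩ := hy
    rw [P.b.repr_self, Finsupp.single_apply]
    split <;> norm_num
  | zero => simp
  | add y z _ _ ihy ihz => rw [map_add]; simpa using add_nonneg ihy ihz

theorem coord_s_eq_zero_of_mem_QS {s : Fin P.rank} {x : V}
    (hx : x ∈ P.QS {i | i ≠ s}) : P.b.repr x s = 0 := by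
  induction hx using AddSubgroup.closure_induction with
  | mem y hy =>
    obtain ⟨j, hj, rfl⟩ := hy
    rw [P.b.repr_self, Finsupp.single_apply]
    exact if_neg hj
  | zero => simp
  | add y z _ _ ihy ihz => rw [map_add]; simpa using by rw [ihy, ihz]; norm_num
  | neg y _ ihy => rw [map_neg]; simpa using ihy

end BasedRootSystem

/-- If `w1, w2 ∈ W^S` are distinct of equal length, then
`w1.0 - w2.0 ∉ Q_S^+ = Q_S ∩ Q^+`. -/
theorem dotZero_sub_dotZero_not_mem_QSplus
    {V : Type*} [NormedAddCommGroup V] [InnerProductSpace ℝ V] [FiniteDimensional ℝ V]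
    (P : BasedRootSystem V) (hirr : P.Irred) (s : Fin P.rank)
    (hcom : ∀ β ∈ P.posRoots, P.b.repr β s ≤ 1)
    (w1 w2 : V ≃ₗᵢ[ℝ] V)
    (hw1 : w1 ∈ P.WS {i | i ≠ s}) (hw2 : w2 ∈ P.WS {i | i ≠ s})
    (hlen : P.len w1 = P.len w2) (hne : w1 ≠ w2) :
    ¬ (P.dotZero w1 - P.dotZero w2 ∈ P.QS {i | i ≠ s} ∧
        P.dotZero w1 - P.dotZero w2 ∈ P.Qplus) := by
  rintro ⟨hQS, hQp⟩
  obtain ⟨hw1g, hw1c⟩ := hw1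
  obtain ⟨hw2g, hw2c⟩ := hw2
  have hrw : P.dotZero w1 - P.dotZero w2 = w1 P.rho - w2 P.rho := by
    simp only [BasedRootSystem.dotZero]; abel
  rw [hrw] at hQS hQp
  set μ := w1 P.rho - w2 P.rho with hμdef
  have hcoord : ∀ i, 0 ≤ P.b.repr μ i := fun i => P.coords_nonneg_of_mem_Qplus hQp i
  have hcs : P.b.repr μ s = 0 := P.coord_s_eq_zero_of_mem_QS hQS
  have hinner_nonneg : 0 ≤ ⟪w2 P.rho, μ⟫ := by
    rw [P.inner_eq_sum_coords]
    apply Finset.sum_nonneg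
    intro j _
    rcases eq_or_ne j s with rfl | hj
    · rw [hcs, zero_mul]
    · apply mul_nonneg (hcoord j)
      obtain ⟨γ, hγ, hγ2⟩ := hw2c (P.b j) (P.simple_mem_posRoots j)
        (AddSubgroup.subset_closure ⟨j, hj, rfl⟩)
      rw [← hγ2, w2.inner_map_map]
      exact (P.inner_rho_pos hγ).le
  have hnorm : ⟪w1 P.rho, w1 P.rho⟫ = ⟪w2 P.rho, w2 P.rho⟫ := by
    rw [w1.inner_map_map, w2.inner_map_map]
  have hexp : w1 P.rho = w2 P.rho + μ := by rw [hμdef]; abel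
  have hzero : ⟪μ, μ⟫ = 0 := by
    rw [hexp, real_inner_add_add_self] at hnorm
    have hn : 0 ≤ ⟪μ, μ⟫ := real_inner_self_nonneg
    linarith
  have hμ0 : μ = 0 := inner_self_eq_zero.mp hzero
  have heq : w2 P.rho = w1 P.rho := by rw [hexp, hμ0, add_zero]
  have hwmem : w1⁻¹ * w2 ∈ P.weylGroup := mul_mem (inv_mem hw1g) hw2g
  have hwρ : (w1⁻¹ * w2) P.rho = P.rho := by
    show w1.symm (w2 P.rho) = P.rho
    rw [heq, w1.symm_apply_apply]
  obtain ⟨L, hL⟩ := P.exists_word hwmem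
  have h1 : (L.map P.sr).prod = 1 := P.listProd_eq_one L.length L rfl (by rw [← hL]; exact hwρ)
  rw [← hL] at h1
  exact hne (inv_mul_eq_one.mp h1)

end
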